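/- For every nonempty compact convex set K ⊆ ℝ², the point ( (h_K(e_1) − h_K(−e_1))/2 , (h_K(e_2) − h_K(−e_2))/2 ) belongs to K; equivalently, the center of the smallest axis-parallel rectangle containing K lies in K. -/

import Mathlib

noncomputable def suppFn (K : Set (EuclideanSpace ℝ (Fin 2)))
    (x : EuclideanSpace ℝ (Fin 2)) : ℝ :=
  sSup ((fun y => (inner ℝ x y : ℝ)) '' K)

lemma suppFn_attained (K : Set (EuclideanSpace ℝ (Fin 2)))
    (hne : K.Nonempty) (hcomp : IsCompact K) (x : EuclideanSpace ℝ (Fin 2)) :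
    ∃ p ∈ K, (inner ℝ x p : ℝ) = suppFn K x ∧
      ∀ y ∈ K, (inner ℝ x y : ℝ) ≤ suppFn K x := by
  obtain ⟨p, hpK, hmax⟩ := hcomp.exists_isMaxOn hne
    ((innerSL ℝ x).continuous.continuousOn)
  have hg : IsGreatest ((fun y => (inner ℝ x y : ℝ)) '' K) (inner ℝ x p : ℝ) := by
    constructor
    · exact Set.mem_image_of_mem _ hpK
    · rintro _ ⟨y, hy, rfl⟩
      exact hmax hy
  have h2 : suppFn K x = (inner ℝ x p : ℝ) := hg.csSup_eq
  refine ⟨p, hpK, h2.symm, ?_⟩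
  intro y hy
  rw [h2]
  exact hmax hy

lemma key_bound (n s H : ℝ) (h1 : -H ≤ s) (h2 : s ≤ H) : n * s ≤ |n| * H :=
  calc n * s ≤ |n * s| := le_abs_self _
    _ = |n| * |s| := abs_mul _ _
    _ ≤ |n| * H := mul_le_mul_of_nonneg_left (abs_le.mpr ⟨h1, h2⟩) (abs_nonneg n)

set_option maxHeartbeats 1000000 in
/-- For every nonempty compact convex `K ⊆ ℝ²`, the point
`((h_K(e₁) − h_K(−e₁))/2, (h_K(e₂) − h_K(−e₂))/2)` — the center of the
smallest axis-parallel rectangle containing `K` — belongs to `K`. -/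
theorem simplest_labeling (K : Set (EuclideanSpace ℝ (Fin 2)))
    (hne : K.Nonempty) (hcomp : IsCompact K) (hconv : Convex ℝ K) :
    ((suppFn K (EuclideanSpace.single (0 : Fin 2) (1 : ℝ)) -
        suppFn K (-EuclideanSpace.single (0 : Fin 2) (1 : ℝ))) / 2) •
        EuclideanSpace.single (0 : Fin 2) (1 : ℝ) +
      ((suppFn K (EuclideanSpace.single (1 : Fin 2) (1 : ℝ)) -
        suppFn K (-EuclideanSpace.single (1 : Fin 2) (1 : ℝ))) / 2) •
        EuclideanSpace.single (1 : Fin 2) (1 : ℝ) ∈ K := by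
  set e1 : EuclideanSpace ℝ (Fin 2) := EuclideanSpace.single (0 : Fin 2) (1 : ℝ) with he1
  set e2 : EuclideanSpace ℝ (Fin 2) := EuclideanSpace.single (1 : Fin 2) (1 : ℝ) with he2
  have hinner1 : ∀ y : EuclideanSpace ℝ (Fin 2), (inner ℝ e1 y : ℝ) = y 0 := by
    intro y; simp [he1, EuclideanSpace.inner_single_left]
  have hinner2 : ∀ y : EuclideanSpace ℝ (Fin 2), (inner ℝ e2 y : ℝ) = y 1 := by
    intro y; simp [he2, EuclideanSpace.inner_single_left]
  have hinner1' : ∀ y : EuclideanSpace ℝ (Fin 2), (inner ℝ (-e1) y : ℝ) = -(y 0) := by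
    intro y; rw [inner_neg_left, hinner1]
  have hinner2' : ∀ y : EuclideanSpace ℝ (Fin 2), (inner ℝ (-e2) y : ℝ) = -(y 1) := by
    intro y; rw [inner_neg_left, hinner2]
  obtain ⟨p, hpK, hpEq, hpLe⟩ := suppFn_attained K hne hcomp e1
  obtain ⟨q, hqK, hqEq, hqLe⟩ := suppFn_attained K hne hcomp (-e1)
  obtain ⟨r, hrK, hrEq, hrLe⟩ := suppFn_attained K hne hcomp e2
  obtain ⟨s, hsK, hsEq, hsLe⟩ := suppFn_attained K hne hcomp (-e2)
  set A := suppFn K e1 with hA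
  set A' := suppFn K (-e1) with hA'
  set B := suppFn K e2 with hB
  set B' := suppFn K (-e2) with hB'
  have hp0 : p 0 = A := by rw [← hpEq, hinner1]
  have hq0 : q 0 = -A' := by have := hqEq; rw [hinner1'] at this; linarith
  have hr1 : r 1 = B := by rw [← hrEq, hinner2]
  have hs1 : s 1 = -B' := by have := hsEq; rw [hinner2'] at this; linarith
  have hybA : ∀ y ∈ K, y 0 ≤ A := fun y hy => by rw [← hinner1 y]; exact hpLe y hy
  have hybA' : ∀ y ∈ K, -A' ≤ y 0 := fun y hy => by
    have := hqLe y hy; rw [hinner1'] at this; linarith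
  have hybB : ∀ y ∈ K, y 1 ≤ B := fun y hy => by rw [← hinner2 y]; exact hrLe y hy
  have hybB' : ∀ y ∈ K, -B' ≤ y 1 := fun y hy => by
    have := hsLe y hy; rw [hinner2'] at this; linarith
  by_contra hc
  obtain ⟨f, t, hfy, hft⟩ :=
    geometric_hahn_banach_closed_point hconv hcomp.isClosed hc
  set m := f e1 with hm
  set n := f e2 with hn
  have hdec : ∀ y : EuclideanSpace ℝ (Fin 2), f y = y 0 * m + y 1 * n := by
    intro y
    have hy : y = y 0 • e1 + y 1 • e2 := by
      ext i; fin_cases i <;> simp [he1, he2, EuclideanSpace.single_apply]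
    conv_lhs => rw [hy]
    rw [map_add, map_smul, map_smul, smul_eq_mul, smul_eq_mul]
  have hft' : t < (A - A') / 2 * m + (B - B') / 2 * n := by
    have : f (((A - A') / 2) • e1 + ((B - B') / 2) • e2) =
        (A - A') / 2 * m + (B - B') / 2 * n := by
      rw [map_add, map_smul, map_smul, smul_eq_mul, smul_eq_mul]
    rw [← this]; exact hft
  set W := (A + A') / 2 with hW
  set H := (B + B') / 2 with hH
  have hm1 : m * W < |n| * H := by
    have h1 := hfy p hpK
    rw [hdec p, hp0] at h1
    have hb1 := hybB p hpK; have hb2 := hybB' p hpK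
    have h2 := key_bound n ((B - B') / 2 - p 1) H
      (by rw [hH]; linarith) (by rw [hH]; linarith)
    rw [hW]; nlinarith [h2]
  have hm2 : -(m * W) < |n| * H := by
    have h1 := hfy q hqK
    rw [hdec q, hq0] at h1
    have hb1 := hybB q hqK; have hb2 := hybB' q hqK
    have h2 := key_bound n ((B - B') / 2 - q 1) H
      (by rw [hH]; linarith) (by rw [hH]; linarith)
    rw [hW]; nlinarith [h2]
  have hn1 : n * H < |m| * W := by
    have h1 := hfy r hrK
    rw [hdec r, hr1] at h1
    have hb1 := hybA r hrK; have hb2 := hybA' r hrK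
    have h2 := key_bound m ((A - A') / 2 - r 0) W
      (by rw [hW]; linarith) (by rw [hW]; linarith)
    rw [hH]; nlinarith [h2]
  have hn2 : -(n * H) < |m| * W := by
    have h1 := hfy s hsK
    rw [hdec s, hs1] at h1
    have hb1 := hybA s hsK; have hb2 := hybA' s hsK
    have h2 := key_bound m ((A - A') / 2 - s 0) W
      (by rw [hW]; linarith) (by rw [hW]; linarith)
    rw [hH]; nlinarith [h2]
  have habs1 : |m| * W < |n| * H := by
    rcases abs_cases m with ⟨h, _⟩ | ⟨h, _⟩ <;> rw [h] <;> linarith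
  have habs2 : |n| * H < |m| * W := by
    rcases abs_cases n with ⟨h, _⟩ | ⟨h, _⟩ <;> rw [h] <;> linarith
  linarith
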